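/- If G is a graph with minimum degree δ(G) ≥ 2, then for any vertex v that is not a cut-vertex of a connected graph G, the set V(G) \ {v} is a PSD fort of G; consequently, zpir(G) ≥ 2, i.e., no singleton is a maximal PSD-irredundant set. -/

import Mathlib

/-- A standard fort: a nonempty set `F` such that no vertex outside `F` has exactly one
neighbor in `F`. -/
def stdFort {V : Type*} (G : SimpleGraph V) (F : Set V) : Prop :=
  F.Nonempty ∧ ∀ v ∉ F, (G.neighborSet v ∩ F).ncard ≠ 1

/-- The vertex set of the connected component of `u` in the subgraph induced by `F`. -/
def compOf {V : Type*} (G : SimpleGraph V) (F : Set V) (u : F) : Set V :=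
  {w | ∃ hw : w ∈ F, (G.induce F).Reachable ⟨w, hw⟩ u}

/-- A PSD fort: a nonempty set each of whose induced connected components is a standard
fort of `G`. -/
def psdFort {V : Type*} (G : SimpleGraph V) (F : Set V) : Prop :=
  F.Nonempty ∧ ∀ u : F, stdFort G (compOf G F u)

/-- `S` is PSD-irredundant if every element of `S` has a private PSD fort. -/
def psdIrr {V : Type*} (G : SimpleGraph V) (S : Set V) : Prop :=
  ∀ u ∈ S, ∃ F : Set V, psdFort G F ∧ S ∩ F = {u}

section Aux

variable {V : Type*} {G : SimpleGraph V}

/-- Reachability within a set `s`, in the ambient graph. -/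
def reachIn (G : SimpleGraph V) (s : Set V) (x y : V) : Prop :=
  ∃ p : G.Walk x y, ∀ z ∈ p.support, z ∈ s

/-- Connectivity of a set, phrased ambiently. -/
def connIn (G : SimpleGraph V) (s : Set V) : Prop :=
  s.Nonempty ∧ ∀ x ∈ s, ∀ y ∈ s, reachIn G s x y

lemma reachIn.refl {s : Set V} {x : V} (hx : x ∈ s) : reachIn G s x x :=
  ⟨SimpleGraph.Walk.nil, by simp [hx]⟩

lemma reachIn.symm' {s : Set V} {x y : V} (h : reachIn G s x y) : reachIn G s y x := by
  obtain ⟨p, hp⟩ := h; exact ⟨p.reverse, by simpa using hp⟩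

lemma reachIn.trans' {s : Set V} {x y z : V} (h : reachIn G s x y) (h' : reachIn G s y z) :
    reachIn G s x z := by
  obtain ⟨p, hp⟩ := h; obtain ⟨q, hq⟩ := h'
  refine ⟨p.append q, fun w hw => ?_⟩
  rcases (SimpleGraph.Walk.mem_support_append_iff _ _).1 hw with h | h
  · exact hp _ h
  · exact hq _ h

lemma reachIn.mono {s t : Set V} (hst : s ⊆ t) {x y : V} (h : reachIn G s x y) :
    reachIn G t x y := by
  obtain ⟨p, hp⟩ := h
  exact ⟨p, fun z hz => hst (hp z hz)⟩

lemma reachIn.of_adj {s : Set V} {x y : V} (h : G.Adj x y) (hx : x ∈ s) (hy : y ∈ s) :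
    reachIn G s x y :=
  ⟨h.toWalk, by simp [hx, hy]⟩

lemma induce_reachable_of_walk {s : Set V} :
    ∀ {x y : V} (p : G.Walk x y), (∀ z ∈ p.support, z ∈ s) → ∀ (hx : x ∈ s) (hy : y ∈ s),
      (G.induce s).Reachable ⟨x, hx⟩ ⟨y, hy⟩ := by
  intro x y p
  induction p with
  | nil => intro _ _ _; rfl
  | @cons a b c h q ih =>
    intro hp ha hc
    have hb : b ∈ s := hp b (by simp)
    have hadj : (G.induce s).Adj ⟨a, ha⟩ ⟨b, hb⟩ := h
    exact hadj.reachable.trans (ih (fun z hz => hp z (by simp [hz])) hb hc)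

lemma compOf_eq_of_induce_conn {F : Set V}
    (h : ∀ x ∈ F, ∀ y ∈ F, ∀ (hx : x ∈ F) (hy : y ∈ F),
      (G.induce F).Reachable ⟨x, hx⟩ ⟨y, hy⟩) (u : F) : compOf G F u = F := by
  ext w
  constructor
  · rintro ⟨hw, -⟩; exact hw
  · intro hw
    exact ⟨hw, by simpa using h w hw u u.2 hw u.2⟩

lemma psdFort_of_conn_aux {F : Set V} (hne : F.Nonempty)
    (h : ∀ x ∈ F, ∀ y ∈ F, ∀ (hx : x ∈ F) (hy : y ∈ F),
      (G.induce F).Reachable ⟨x, hx⟩ ⟨y, hy⟩)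
    (hf : ∀ v ∉ F, (G.neighborSet v ∩ F).ncard ≠ 1) : psdFort G F := by
  refine ⟨hne, fun u => ?_⟩
  rw [compOf_eq_of_induce_conn h u]
  exact ⟨hne, hf⟩

lemma psdFort_of_induceConnected {F : Set V} (h : (G.induce F).Connected)
    (hf : ∀ v ∉ F, (G.neighborSet v ∩ F).ncard ≠ 1) : psdFort G F := by
  have hne : F.Nonempty := by
    obtain ⟨x⟩ := h.nonempty
    exact ⟨x.1, x.2⟩
  exact psdFort_of_conn_aux hne (fun x hx y hy hx' hy' => h.preconnected _ _) hf

lemma psdFort_of_connIn {F : Set V} (h : connIn G F)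
    (hf : ∀ v ∉ F, (G.neighborSet v ∩ F).ncard ≠ 1) : psdFort G F := by
  refine psdFort_of_conn_aux h.1 (fun x hx y hy hx' hy' => ?_) hf
  obtain ⟨p, hp⟩ := h.2 x hx y hy
  exact induce_reachable_of_walk p hp hx' hy'

noncomputable def distIn (G : SimpleGraph V) (s : Set V) (x y : V) : ℕ :=
  sInf {n | ∃ p : G.Walk x y, p.length = n ∧ ∀ z ∈ p.support, z ∈ s}

lemma distIn_le {s : Set V} {x y : V} (p : G.Walk x y) (hp : ∀ z ∈ p.support, z ∈ s) :
    distIn G s x y ≤ p.length :=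
  Nat.sInf_le ⟨p, rfl, hp⟩

lemma exists_shortest {s : Set V} {x y : V} (h : reachIn G s x y) :
    ∃ p : G.Walk x y, p.IsPath ∧ (∀ z ∈ p.support, z ∈ s) ∧ p.length = distIn G s x y := by
  classical
  obtain ⟨p0, hp0⟩ := h
  have hne : {n | ∃ p : G.Walk x y, p.length = n ∧ ∀ z ∈ p.support, z ∈ s}.Nonempty :=
    ⟨p0.length, p0, rfl, hp0⟩
  obtain ⟨q, hqlen, hqs⟩ := Nat.sInf_mem hne
  refine ⟨q.bypass, q.bypass_isPath, fun z hz => hqs z (q.support_bypass_subset hz), ?_⟩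
  have h1 : distIn G s x y ≤ q.bypass.length :=
    distIn_le _ (fun z hz => hqs z (q.support_bypass_subset hz))
  have h2 : q.bypass.length ≤ q.length := q.length_bypass_le
  have h3 : q.length = distIn G s x y := hqlen
  omega

lemma mem_of_walk_closed {t C : Set V} (hcl : ∀ x ∈ C, ∀ y ∈ t, G.Adj x y → y ∈ C) :
    ∀ {x y : V} (p : G.Walk x y), (∀ z ∈ p.support, z ∈ t) → x ∈ C → y ∈ C := by
  intro x y p
  induction p with
  | nil => exact fun _ h => h
  | @cons a b c h q ih =>
    intro hp ha
    exact ih (fun z hz => hp z (by simp [hz])) (hcl a ha b (hp b (by simp)) h)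

/-- A vertex of `C` farthest from `v` is not a cut vertex of `s`. -/
lemma far [Finite V] {s C : Set V} {v : V} (hs : connIn G s) (hv : v ∈ s)
    (hCs : C ⊆ s \ {v}) (hCne : C.Nonempty)
    (hCcl : ∀ x ∈ C, ∀ y ∈ s, y ≠ v → G.Adj x y → y ∈ C) :
    ∃ w ∈ C, connIn G (s \ {w}) := by
  classical
  obtain ⟨w, hwC, hwmax'⟩ : ∃ a ∈ C, ∀ a' ∈ C, distIn G s v a ≤ distIn G s v a' →
      distIn G s v a = distIn G s v a' := by
    obtain ⟨a, ha, hm⟩ := C.toFinite.exists_maximalFor (distIn G s v) C hCne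
    exact ⟨a, ha, fun b hb h => le_antisymm h (hm hb h)⟩
  have hwmax : ∀ x ∈ C, distIn G s v x ≤ distIn G s v w := by
    intro x hx
    rcases le_total (distIn G s v x) (distIn G s v w) with h | h
    · exact h
    · exact le_of_eq (hwmax' x hx h).symm
  have hwv : w ≠ v := fun h => (hCs hwC).2 (by simp [h])
  have hcl' : ∀ x ∈ C, ∀ y ∈ s \ {v}, G.Adj x y → y ∈ C := fun x hx y hy hadj =>
    hCcl x hx y hy.1 hy.2 hadj
  have key : ∀ x ∈ s, x ≠ w → reachIn G (s \ {w}) v x := by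
    intro x hx hxw
    obtain ⟨p, hpath, hps, hplen⟩ := exists_shortest (hs.2 v hv x hx)
    by_cases hw : w ∈ p.support
    · exfalso
      set q1 := p.takeUntil w hw with hq1
      set q2 := p.dropUntil w hw with hq2
      have hspec : q1.append q2 = p := p.take_spec hw
      have hsupp : p.support = q1.support ++ q2.support.tail := by
        rw [← hspec]; exact SimpleGraph.Walk.support_append _ _
      have hnd := hpath.support_nodup
      rw [hsupp] at hnd
      have hdisj := (List.nodup_append.1 hnd).2.2
      have hvq2 : v ∉ q2.support := by
        intro hv2
        rw [SimpleGraph.Walk.support_eq_cons q2] at hv2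
        rcases List.mem_cons.1 hv2 with h | h
        · exact hwv h.symm
        · exact hdisj v q1.start_mem_support v h rfl
      have hq2s : ∀ z ∈ q2.support, z ∈ s \ {v} := fun z hz =>
        ⟨hps z (p.support_dropUntil_subset hw hz),
          fun hzv => hvq2 ((Set.mem_singleton_iff.1 hzv) ▸ hz)⟩
      have hxC : x ∈ C := mem_of_walk_closed hcl' q2 hq2s hwC
      have h1 : distIn G s v w ≤ q1.length :=
        distIn_le q1 (fun z hz => hps z (p.support_takeUntil_subset hw hz))
      have h2 : 1 ≤ q2.length := by
        rcases Nat.eq_zero_or_pos q2.length with h | h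
        · exact absurd (SimpleGraph.Walk.eq_of_length_eq_zero h).symm hxw
        · exact h
      have hlen : q1.length + q2.length = p.length := by
        have := congrArg SimpleGraph.Walk.length hspec
        simpa [SimpleGraph.Walk.length_append] using this
      have hmax := hwmax x hxC
      omega
    · refine ⟨p, fun z hz => ⟨hps z hz, fun hzw => ?_⟩⟩
      exact hw ((Set.mem_singleton_iff.1 hzw) ▸ hz)
  have hvm : v ∈ s \ {w} := ⟨hv, fun h => hwv (Set.mem_singleton_iff.1 h).symm⟩
  refine ⟨w, hwC, ⟨⟨v, hvm⟩, fun a ha b hb => ?_⟩⟩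
  have ra : ∀ a ∈ s \ {w}, reachIn G (s \ {w}) a v := by
    intro a ha
    rcases eq_or_ne a v with rfl | hav
    · exact reachIn.refl hvm
    · exact (key a ha.1 (fun h => ha.2 (by simp [h]))).symm'
  exact (ra a ha).trans' ((ra b hb).symm')

lemma connIn_comp {t : Set V} {u0 : V} (hu0 : u0 ∈ t) :
    connIn G {x | x ∈ t ∧ reachIn G t u0 x} := by
  classical
  refine ⟨⟨u0, hu0, reachIn.refl hu0⟩, fun x hx y hy => ?_⟩
  obtain ⟨p, hp⟩ := (hx.2.symm').trans' hy.2
  refine ⟨p, fun z hz => ⟨hp z hz, hx.2.trans' ⟨p.takeUntil z hz, fun a ha =>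
    hp a (p.support_takeUntil_subset hz ha)⟩⟩⟩

lemma connIn_insert {t : Set V} {v y : V} (ht : connIn G t) (hy : y ∈ t) (hadj : G.Adj v y) :
    connIn G (insert v t) := by
  have hr : ∀ a ∈ insert v t, reachIn G (insert v t) a v := by
    intro a ha
    rcases Set.mem_insert_iff.1 ha with rfl | ha'
    · exact reachIn.refl (Set.mem_insert _ _)
    · exact ((ht.2 a ha' y hy).mono (Set.subset_insert _ _)).trans'
        (reachIn.of_adj hadj.symm (Set.mem_insert_of_mem _ hy) (Set.mem_insert _ _))
  exact ⟨⟨v, Set.mem_insert _ _⟩, fun a ha b hb => (hr a ha).trans' ((hr b hb).symm')⟩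

lemma exitfree {s C : Set V} {v : V} (hv : v ∈ s) (hCs : C ⊆ s \ {v})
    (hcl' : ∀ x ∈ C, ∀ y ∈ s \ {v}, G.Adj x y → y ∈ C) :
    ∀ {x : V} (p : G.Walk x v), (∀ z ∈ p.support, z ∈ s) → x ∉ C →
      reachIn G (s \ C) x v := by
  have hvC : v ∉ C := fun h => (hCs h).2 rfl
  intro x p
  induction p with
  | nil => exact fun _ _ => reachIn.refl ⟨hv, hvC⟩
  | @cons a b c h q ih =>
    intro hp haC
    have has : a ∈ s := hp a (by simp)
    rcases eq_or_ne a c with rfl | hac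
    · exact reachIn.refl ⟨hv, hvC⟩
    · have hbs : b ∈ s := hp b (by simp)
      have hbC : b ∉ C := by
        intro hbC
        exact haC (hcl' b hbC a ⟨has, hac⟩ h.symm)
      refine (reachIn.of_adj (s := s \ C) h ⟨has, haC⟩ ⟨hbs, hbC⟩).trans' ?_
      exact ih hv hCs hcl' hvC (fun z hz => hp z (by simp [hz])) hbC

end Aux

section Main

variable {V : Type*} {G : SimpleGraph V}

lemma main_lemma [Finite V] : ∀ (n : ℕ) (s : Set V) (v : V), s.ncard ≤ n → v ∈ s →
    connIn G s →
    (∀ u, u ∉ s → G.neighborSet u ∩ (s \ {v}) = ∅) →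
    (∀ u ∈ s, u ≠ v → 2 ≤ (G.neighborSet u ∩ s).ncard) →
    (G.neighborSet v ∩ s).Nonempty →
    ∃ A ⊆ s \ {v}, A.Nonempty ∧ connIn G A ∧
      (∀ u, u ∉ A → (G.neighborSet u ∩ A).ncard ≠ 1) ∧
      ∃ w ∈ A, connIn G (s \ {w}) := by
  intro n
  induction n with
  | zero =>
    intro s v hcard hv _ _ _ _
    have : s = ∅ := Set.ncard_eq_zero (s.toFinite) |>.1 (Nat.le_zero.1 hcard)
    exact absurd (this ▸ hv) (Set.notMem_empty v)
  | succ n ih =>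
    intro s v hcard hv hconnS hinv hdeg hvN
    obtain ⟨u0, hu0⟩ := hvN
    have hadj0 : G.Adj v u0 := hu0.1
    have hu0v : u0 ≠ v := hadj0.ne'
    have hu0t : u0 ∈ s \ {v} := ⟨hu0.2, by simp [hu0v]⟩
    set C := {x | x ∈ s \ {v} ∧ reachIn G (s \ {v}) u0 x} with hCdef
    have hCs : C ⊆ s \ {v} := fun x hx => hx.1
    have hu0C : u0 ∈ C := ⟨hu0t, reachIn.refl hu0t⟩
    have hCcl : ∀ x ∈ C, ∀ y ∈ s \ {v}, G.Adj x y → y ∈ C := fun x hx y hy hadj =>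
      ⟨hy, hx.2.trans' (reachIn.of_adj hadj hx.1 hy)⟩
    have hCcl' : ∀ x ∈ C, ∀ y ∈ s, y ≠ v → G.Adj x y → y ∈ C := fun x hx y hy hyv hadj =>
      hCcl x hx y ⟨hy, by simp [hyv]⟩ hadj
    have hconnC : connIn G C := connIn_comp hu0t
    have hNC : ∀ u ∈ s, u ≠ v → u ∉ C → G.neighborSet u ∩ C = ∅ := by
      intro u hus huv huC
      ext y
      simp only [Set.mem_inter_iff, Set.mem_empty_iff_false, iff_false, not_and]
      intro hy hyC
      exact huC (hCcl y hyC u ⟨hus, by simp [huv]⟩ hy.symm)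
    by_cases hk : (G.neighborSet v ∩ C).ncard = 1
    · -- exactly one neighbor of v in the component: recurse inside C
      obtain ⟨x0, hx0⟩ := Set.ncard_eq_one.1 hk
      have hx0m : x0 ∈ G.neighborSet v ∩ C := hx0 ▸ rfl
      have hx0C : x0 ∈ C := hx0m.2
      have hx0s : x0 ∈ s := (hCs hx0C).1
      have hx0v : x0 ≠ v := fun h => by simp [h] at hx0C; exact (hCs hx0C).2 rfl
      -- cardinality decreases
      have hcard' : C.ncard ≤ n := by
        have h1 : C.ncard ≤ (s \ {v}).ncard := Set.ncard_le_ncard hCs (Set.toFinite _)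
        have h2 : (s \ {v}).ncard < s.ncard := Set.ncard_diff_singleton_lt_of_mem hv s.toFinite
        omega
      -- invariant
      have hinv' : ∀ u, u ∉ C → G.neighborSet u ∩ (C \ {x0}) = ∅ := by
        intro u huC
        by_cases hus : u ∈ s
        · by_cases huv : u = v
          · subst huv
            ext y
            simp only [Set.mem_inter_iff, Set.mem_empty_iff_false, iff_false, not_and]
            intro hy hyC
            have : y ∈ G.neighborSet u ∩ C := ⟨hy, hyC.1⟩
            rw [hx0] at this
            exact absurd (Set.mem_singleton_iff.1 this) (fun h => hyC.2 (by simp [h]))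
          · have := hNC u hus huv huC
            ext y
            simp only [Set.mem_inter_iff, Set.mem_empty_iff_false, iff_false, not_and]
            intro hy hyC
            have hmem : y ∈ G.neighborSet u ∩ C := ⟨hy, hyC.1⟩
            rw [hNC u hus huv huC] at hmem
            exact hmem
        · have h0 := hinv u hus
          ext y
          simp only [Set.mem_inter_iff, Set.mem_empty_iff_false, iff_false, not_and]
          intro hy hyC
          have : y ∈ G.neighborSet u ∩ (s \ {v}) := ⟨hy, hCs hyC.1⟩
          rw [h0] at this
          exact this
      -- degrees inside C
      have hdeg' : ∀ u ∈ C, u ≠ x0 → 2 ≤ (G.neighborSet u ∩ C).ncard := by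
        intro u huC hux0
        have hus : u ∈ s := (hCs huC).1
        have huv : u ≠ v := fun h => (hCs huC).2 (by simp [h])
        have hsub : G.neighborSet u ∩ s ⊆ G.neighborSet u ∩ C := by
          rintro y ⟨hyN, hys⟩
          refine ⟨hyN, ?_⟩
          rcases eq_or_ne y v with rfl | hyv
          · exfalso
            have hyadj : G.Adj u y := hyN
            have hmem : u ∈ G.neighborSet y ∩ C := ⟨hyadj.symm, huC⟩
            rw [hx0] at hmem
            exact hux0 (Set.mem_singleton_iff.1 hmem)
          · exact hCcl' u huC y hys hyv hyN
        calc 2 ≤ (G.neighborSet u ∩ s).ncard := hdeg u hus huv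
          _ ≤ (G.neighborSet u ∩ C).ncard := Set.ncard_le_ncard hsub (Set.toFinite _)
      -- x0 has a neighbor in C
      have hvN' : (G.neighborSet x0 ∩ C).Nonempty := by
        have h2 : 2 ≤ (G.neighborSet x0 ∩ s).ncard := hdeg x0 hx0s hx0v
        have : ∃ y ∈ G.neighborSet x0 ∩ s, y ≠ v := by
          by_contra hcon
          push_neg at hcon
          have : G.neighborSet x0 ∩ s ⊆ {v} := fun y hy => hcon y hy
          have := Set.ncard_le_ncard this (Set.toFinite _)
          rw [Set.ncard_singleton] at this
          omega
        obtain ⟨y, hy, hyv⟩ := this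
        exact ⟨y, hy.1, hCcl' x0 hx0C y hy.2 hyv hy.1⟩
      obtain ⟨A, hAsub, hAne, hAconn, hAfort, w, hwA, hwconn⟩ :=
        ih C x0 hcard' hx0C hconnC hinv' hdeg' hvN'
      have hwC : w ∈ C := (hAsub hwA).1
      have hwx0 : w ≠ x0 := fun h => (hAsub hwA).2 (by simp [h])
      have hwv : w ≠ v := fun h => (hCs hwC).2 (by simp [h])
      refine ⟨A, fun a ha => hCs (hAsub ha).1, hAne, hAconn, hAfort, w, hwA, ?_⟩
      -- connectivity of s \ {w}
      have hvm : v ∈ s \ {w} := ⟨hv, by simp [Ne.symm hwv]⟩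
      have hx0w : x0 ∈ C \ {w} := ⟨hx0C, by simp [Ne.symm hwx0]⟩
      have hx0nw : x0 ∈ s \ {w} :=
        ⟨hx0s, fun h => hwx0 (Set.mem_singleton_iff.1 h).symm⟩
      have hadjvx0 : G.Adj v x0 := hx0m.1
      have hstep : reachIn G (s \ {w}) x0 v := reachIn.of_adj hadjvx0.symm hx0nw hvm
      have hr : ∀ a ∈ s \ {w}, reachIn G (s \ {w}) a v := by
        intro a ha
        rcases eq_or_ne a v with rfl | hav
        · exact reachIn.refl hvm
        · by_cases haC : a ∈ C
          · have h1 : reachIn G (C \ {w}) a x0 :=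
              hwconn.2 a ⟨haC, fun h => ha.2 (by simpa using h)⟩ x0 hx0w
            have hsub : C \ {w} ⊆ s \ {w} := fun z hz => ⟨(hCs hz.1).1, hz.2⟩
            exact (h1.mono hsub).trans' hstep
          · have h1 : reachIn G (s \ C) a v := by
              obtain ⟨p, hp⟩ := hconnS.2 a ha.1 v hv
              exact exitfree hv hCs (fun x hx y hy hadj => hCcl x hx y hy hadj) p hp haC
            exact h1.mono (show s \ C ⊆ s \ {w} from fun z hz =>
              ⟨hz.1, fun h => hz.2 ((Set.mem_singleton_iff.1 h) ▸ hwC)⟩)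
      exact ⟨⟨v, hvm⟩, fun a ha b hb => (hr a ha).trans' ((hr b hb).symm')⟩
    · -- v has ≥ 2 (or 0, impossible) neighbors in C : take A = C
      refine ⟨C, hCs, ⟨u0, hu0C⟩, hconnC, ?_, far hconnS hv hCs ⟨u0, hu0C⟩ hCcl'⟩
      intro u huC
      by_cases hus : u ∈ s
      · by_cases huv : u = v
        · subst huv; exact hk
        · rw [hNC u hus huv huC]; simp
      · have h0 := hinv u hus
        have : G.neighborSet u ∩ C = ∅ := by
          apply Set.eq_empty_of_subset_empty
          rw [← h0]
          exact fun y hy => ⟨hy.1, hCs hy.2⟩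
        rw [this]; simp

end Main

/-- For a connected graph with `δ(G) ≥ 2`: for every non-cut-vertex `v`, `V(G) \ {v}`
is a PSD fort; consequently `zpir(G) ≥ 2`. -/
theorem stmt13 {V : Type*} [Fintype V] (G : SimpleGraph V) (hconn : G.Connected)
    (hδ : ∀ v : V, 2 ≤ (G.neighborSet v).ncard) :
    (∀ v : V, (G.induce ({v}ᶜ : Set V)).Connected → psdFort G ({v}ᶜ : Set V)) ∧
      2 ≤ sInf {n | ∃ S : Set V,
        (psdIrr G S ∧ ∀ T : Set V, S ⊂ T → ¬ psdIrr G T) ∧ S.ncard = n} := by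
  classical
  have hNv : ∀ v : V, G.neighborSet v ∩ ({v}ᶜ : Set V) = G.neighborSet v := by
    intro v
    ext x
    simp only [Set.mem_inter_iff, Set.mem_compl_iff, Set.mem_singleton_iff, and_iff_left_iff_imp]
    exact fun h => (h : G.Adj v x).ne'
  have part1 : ∀ v : V, (G.induce ({v}ᶜ : Set V)).Connected → psdFort G ({v}ᶜ : Set V) := by
    intro v hvconn
    apply psdFort_of_induceConnected hvconn
    intro u hu
    have huv : u = v := by simpa using hu
    subst huv
    rw [hNv u]
    have := hδ u
    omega
  refine ⟨part1, ?_⟩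
  have hVne : Nonempty V := hconn.nonempty
  have hunivconn : connIn G (Set.univ : Set V) :=
    ⟨⟨Classical.arbitrary V, trivial⟩, fun x _ y _ => by
      obtain ⟨p⟩ := hconn.preconnected x y
      exact ⟨p, fun z _ => trivial⟩⟩
  have hunivfort : psdFort G (Set.univ : Set V) :=
    psdFort_of_connIn hunivconn (by intro v hv; exact absurd trivial hv)
  apply le_csInf
  · -- the set of cardinalities of maximal PSD-irredundant sets is nonempty
    have hfin : {S : Set V | psdIrr G S}.Finite := Set.toFinite _
    have hne : {S : Set V | psdIrr G S}.Nonempty :=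
      ⟨∅, fun u hu => absurd hu (Set.notMem_empty u)⟩
    obtain ⟨S, hS, hmax'⟩ := hfin.exists_maximalFor Set.ncard _ hne
    refine ⟨S.ncard, S, ⟨hS, ?_⟩, rfl⟩
    intro T hST hT
    have h1 : S.ncard < T.ncard := Set.ncard_lt_ncard hST T.toFinite
    have h2 := hmax' hT (le_of_lt h1)
    omega
  · intro n hn
    obtain ⟨S, ⟨hSirr, hSmax⟩, hScard⟩ := hn
    by_contra hlt
    push_neg at hlt
    interval_cases n
    · -- S = ∅ : but the singleton {v₀} is PSD-irredundant
      have hS0 : S = ∅ := Set.ncard_eq_zero S.toFinite |>.1 hScard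
      subst hS0
      set v0 := Classical.arbitrary V
      refine hSmax {v0} (Set.empty_ssubset.2 ⟨v0, rfl⟩) ?_
      intro u hu
      have : u = v0 := hu
      subst this
      exact ⟨Set.univ, hunivfort, by simp⟩
    · -- S = {v} : extend to {v, w}
      obtain ⟨v, rfl⟩ := Set.ncard_eq_one.1 hScard
      obtain ⟨A, hAsub, hAne, hAconn, hAfort, w, hwA, hwconn⟩ :=
        main_lemma (Set.univ : Set V).ncard Set.univ v le_rfl trivial hunivconn
          (fun u hu => absurd trivial hu)
          (fun u _ _ => by rw [Set.inter_univ]; exact hδ u)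
          (by rw [Set.inter_univ]; exact Set.nonempty_of_ncard_ne_zero (by have := hδ v; omega))
      have hvA : v ∉ A := fun h => (hAsub h).2 rfl
      have hwv : w ≠ v := fun h => hvA (h ▸ hwA)
      have hcomplconn : connIn G ({w}ᶜ : Set V) := by
        have : (Set.univ : Set V) \ {w} = ({w}ᶜ : Set V) := by
          ext x; simp
        rw [← this]
        exact hwconn
      refine hSmax (insert w {v}) ?_ ?_
      · refine Set.ssubset_insert ?_
        simp [hwv]
      · intro u hu
        rcases Set.mem_insert_iff.1 hu with rfl | hu'
        · -- private fort for w : the set A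
          refine ⟨A, psdFort_of_connIn hAconn hAfort, ?_⟩
          ext z
          simp only [Set.mem_inter_iff, Set.mem_insert_iff, Set.mem_singleton_iff]
          constructor
          · rintro ⟨rfl | rfl, hzA⟩
            · rfl
            · exact absurd hzA hvA
          · rintro rfl
            exact ⟨Or.inl rfl, hwA⟩
        · -- u = v; private fort for v : {w}ᶜ
          have : u = v := hu'
          subst this
          refine ⟨({w}ᶜ : Set V), ?_, ?_⟩
          · apply psdFort_of_connIn hcomplconn
            intro z hz
            have : z = w := by simpa using hz
            subst this
            rw [hNv z]
            have := hδ z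
            omega
          · ext z
            simp only [Set.mem_inter_iff, Set.mem_insert_iff, Set.mem_singleton_iff,
              Set.mem_compl_iff]
            constructor
            · rintro ⟨rfl | rfl, hz⟩
              · exact absurd rfl hz
              · rfl
            · rintro rfl
              exact ⟨Or.inr rfl, Ne.symm hwv⟩
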